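/- Let λ, μ, θ be real constants with λ ≠ −1, μ ≠ 0, θ ≠ 1, let ψ > 0, and let I ⊆ (0, ∞) be an open interval on which (1+λ)k^{1−θ} + μ > 0. Define y(k) = ψ[(1+λ)k^{1−θ} + μ]^{1/((1+λ)(1−θ))}. Then y is differentiable on I with y(k) > 0, and its marginal rate of substitution satisfies R(k) = y(k)/y'(k) − k = λk + μk^θ for all k ∈ I. -/
import Mathlib


open Real Set

/-- The function `y(k) = ψ[(1+λ)k^{1-θ} + μ]^{1/((1+λ)(1-θ))}` is differentiable and
positive on an open interval `I ⊆ (0, ∞)` where `(1+λ)k^{1-θ} + μ > 0`, and its marginal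
rate of substitution is `R(k) = y(k)/y'(k) - k = λk + μk^θ`. -/
theorem stmt_1 (lam mu th ψ : ℝ) (hlam : lam ≠ -1) (hmu : mu ≠ 0) (hth : th ≠ 1)
    (hψ : 0 < ψ) (p q : ℝ) (hpq : 0 ≤ p) (y : ℝ → ℝ)
    (hy : ∀ k : ℝ, y k = ψ * ((1 + lam) * k ^ (1 - th) + mu) ^ (1 / ((1 + lam) * (1 - th))))
    (hbr : ∀ k ∈ Ioo p q, 0 < (1 + lam) * k ^ (1 - th) + mu) :
    ∀ k ∈ Ioo p q, DifferentiableAt ℝ y k ∧ 0 < y k ∧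
      y k / deriv y k - k = lam * k + mu * k ^ th := by
  intro k hk
  have hk0 : 0 < k := lt_of_le_of_lt hpq hk.1
  have ha : (1 : ℝ) + lam ≠ 0 := by
    intro h; apply hlam; linarith
  have hb : (1 : ℝ) - th ≠ 0 := sub_ne_zero.mpr (Ne.symm hth)
  set a := (1 : ℝ) + lam with ha_def
  set α := 1 / (a * (1 - th)) with hα_def
  have hu : 0 < a * k ^ (1 - th) + mu := hbr k hk
  have hyfun : y = fun x : ℝ => ψ * ((a * x ^ (1 - th) + mu) ^ α) := funext hy
  have h1 : HasDerivAt (fun x : ℝ => a * x ^ (1 - th) + mu)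
      (a * ((1 - th) * k ^ (1 - th - 1))) k := by
    have h := Real.hasDerivAt_rpow_const (x := k) (p := 1 - th) (Or.inl (ne_of_gt hk0))
    exact (h.const_mul a).add_const mu
  have h2 : HasDerivAt y
      (ψ * (a * ((1 - th) * k ^ (1 - th - 1)) * α * (a * k ^ (1 - th) + mu) ^ (α - 1))) k := by
    rw [hyfun]
    exact (h1.rpow_const (Or.inl (ne_of_gt hu))).const_mul ψ
  have hdiff : DifferentiableAt ℝ y k := h2.differentiableAt
  have hypos : 0 < y k := by
    rw [hy]; exact mul_pos hψ (Real.rpow_pos_of_pos hu _)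
  refine ⟨hdiff, hypos, ?_⟩
  rw [h2.deriv, hy]
  have hαa : a * (1 - th) * α = 1 := by
    rw [hα_def]; field_simp
  have hupos := hu
  have hne1 : (a * k ^ (1 - th) + mu) ^ (α - 1) ≠ 0 := ne_of_gt (Real.rpow_pos_of_pos hu _)
  have hne2 : k ^ (1 - th - 1) ≠ 0 := ne_of_gt (Real.rpow_pos_of_pos hk0 _)
  have hcoef : a * ((1 - th) * k ^ (1 - th - 1)) * α = k ^ (1 - th - 1) := by
    have h : a * ((1 - th) * k ^ (1 - th - 1)) * α = a * (1 - th) * α * k ^ (1 - th - 1) := by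
      ring
    rw [h, hαa, one_mul]
  have hkk : k ^ (1 - th - 1) * k ^ th = 1 := by
    rw [← Real.rpow_add hk0]; norm_num
  have hsub : (a * k ^ (1 - th) + mu) ^ α / (a * k ^ (1 - th) + mu) ^ (α - 1)
      = a * k ^ (1 - th) + mu := by
    rw [← Real.rpow_sub hu]; simp
  rw [hcoef]
  have hdiv : ψ * (a * k ^ (1 - th) + mu) ^ α /
      (ψ * (k ^ (1 - th - 1) * (a * k ^ (1 - th) + mu) ^ (α - 1)))
      = (a * k ^ (1 - th) + mu) * k ^ th := by
    rw [mul_div_mul_left _ _ (ne_of_gt hψ), mul_comm (k ^ (1 - th - 1)), ← div_div, hsub,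
      div_eq_iff hne2, mul_assoc, mul_comm (k ^ th), hkk, mul_one]
  rw [hdiv]
  have hk1 : k ^ (1 - th) * k ^ th = k := by
    rw [← Real.rpow_add hk0]; norm_num
  have hexp : (a * k ^ (1 - th) + mu) * k ^ th = a * (k ^ (1 - th) * k ^ th) + mu * k ^ th := by
    ring
  rw [hexp, hk1, ha_def]; ring
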